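/- arXiv:2006.16157 — 4 statements merged into one kernel-verified Lean document; each statement's English description precedes it below -/
import Mathlib

section
/- Let Ω = [[0, -I_n],[I_n, 0]] represent the standard symplectic form ω on ℝ^(2n). Given symmetric real n×n matrices R and I with I positive definite, the matrix J = [[-I⁻¹R, I⁻¹],[-I - R I⁻¹ R, R I⁻¹]] tames ω, i.e., ω(ξ, Jξ) > 0 for all nonzero ξ ∈ ℝ^(2n). -/
open Matrix


/-- With Ω = [[0,-Iₙ],[Iₙ,0]] the matrix of the standard symplectic form
ω(x,y) = xᵀ Ω y, the matrix J = [[-I⁻¹R, I⁻¹],[-I - R I⁻¹ R, R I⁻¹]] built from symmetric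
R, I with I positive definite tames ω: ω(ξ, Jξ) > 0 for all ξ ≠ 0. -/
theorem stmt_2 {n : ℕ} (R I : Matrix (Fin n) (Fin n) ℝ)
    (hR : R.IsSymm) (hI : I.IsSymm) (hIpos : I.PosDef) :
    let Ω : Matrix (Fin n ⊕ Fin n) (Fin n ⊕ Fin n) ℝ := Matrix.fromBlocks 0 (-1) 1 0
    let J : Matrix (Fin n ⊕ Fin n) (Fin n ⊕ Fin n) ℝ :=
      Matrix.fromBlocks (-(I⁻¹ * R)) I⁻¹ (-I - R * I⁻¹ * R) (R * I⁻¹)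
    ∀ ξ : Fin n ⊕ Fin n → ℝ, ξ ≠ 0 → 0 < ξ ⬝ᵥ Ω.mulVec (J.mulVec ξ) := by
  intro Ω J ξ hξ
  have hIinv : I⁻¹.PosDef := hIpos.inv
  set x : Fin n → ℝ := ξ ∘ Sum.inl with hxdef
  set y : Fin n → ℝ := ξ ∘ Sum.inr with hydef
  have hξeq : ξ = Sum.elim x y := by ext (i|i) <;> rfl
  -- symmetric rewrite helper
  have hsymm : ∀ (M : Matrix (Fin n) (Fin n) ℝ), M.IsSymm →
      ∀ (v w : Fin n → ℝ), v ⬝ᵥ M *ᵥ w = (M *ᵥ v) ⬝ᵥ w := by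
    intro M hM v w
    rw [dotProduct_mulVec,
      show v ᵥ* M = Mᵀ *ᵥ v from by
        rw [← transpose_transpose M, vecMul_transpose, transpose_transpose], hM.eq]
  have hinvsymm : (I⁻¹).IsSymm := by
    rw [Matrix.IsSymm, Matrix.transpose_nonsing_inv, hI.eq]
  have key : ξ ⬝ᵥ Ω.mulVec (J.mulVec ξ) =
      x ⬝ᵥ I.mulVec x + (R.mulVec x - y) ⬝ᵥ I⁻¹.mulVec (R.mulVec x - y) := by
    rw [hξeq]
    show (Sum.elim x y) ⬝ᵥ (fromBlocks 0 (-1) 1 0) *ᵥ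
      ((fromBlocks (-(I⁻¹ * R)) I⁻¹ (-I - R * I⁻¹ * R) (R * I⁻¹)) *ᵥ Sum.elim x y) = _
    simp only [fromBlocks_mulVec, Sum.elim_comp_inl, Sum.elim_comp_inr,
      sumElim_dotProduct_sumElim, mulVec_add, mulVec_sub, mulVec_neg, sub_mulVec, neg_mulVec,
      zero_mulVec, one_mulVec, dotProduct_add, dotProduct_sub, dotProduct_neg, add_mulVec,
      zero_add, add_zero, Pi.add_apply]
    simp only [← mulVec_mulVec, sub_dotProduct, dotProduct_zero, zero_dotProduct]
    rw [hsymm R hR x (I⁻¹ *ᵥ (R *ᵥ x)), hsymm R hR x (I⁻¹ *ᵥ y)]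
    ring
  rw [key]
  rcases eq_or_ne x 0 with hx0 | hx0
  · have hy0 : y ≠ 0 := by
      intro h; apply hξ; rw [hξeq, hx0, h]; ext (i|i) <;> simp
    have hz : R *ᵥ x - y ≠ 0 := by simp [hx0, hy0]
    have h1 : 0 < (R *ᵥ x - y) ⬝ᵥ I⁻¹ *ᵥ (R *ᵥ x - y) := hIinv.dotProduct_mulVec_pos hz
    have h2 : x ⬝ᵥ I *ᵥ x = 0 := by simp [hx0]
    linarith
  · have h1 : 0 < x ⬝ᵥ I *ᵥ x := hIpos.dotProduct_mulVec_pos hx0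
    have h2 : 0 ≤ (R *ᵥ x - y) ⬝ᵥ I⁻¹ *ᵥ (R *ᵥ x - y) :=
      hIinv.posSemidef.dotProduct_mulVec_nonneg _
    linarith
end

section
/- Let ω be the standard symplectic form on ℝ^(2n) and let J be a complex structure on ℝ^(2n) (J² = -Id) that is compatible with ω and tames ω. Let (e₁,…,eₙ,f₁,…,fₙ) be the standard symplectic basis. Then there exists a unique complex n×n matrix N such that, viewing ℝ^(2n) as a complex vector space via J, e_a = Σ_b N_{ab} f_b for all a, and moreover N is symmetric and its imaginary part is positive definite. -/
open Matrix

/-- Let ω be the standard symplectic form on ℝ^(2n) (matrix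
Ω = [[0,-Iₙ],[Iₙ,0]]) and J a complex structure compatible with ω and taming ω.
With (e₁,…,eₙ,f₁,…,fₙ) the standard symplectic basis, there is a unique complex
n×n matrix N such that e_a = Σ_b N_{ab}·f_b in the complex vector space (ℝ^(2n), J)
(where (α+iβ)·v = αv + βJv); moreover N is symmetric and Im N is positive definite. -/
theorem stmt_3 {n : ℕ} (J : Matrix (Fin n ⊕ Fin n) (Fin n ⊕ Fin n) ℝ)
    (Ω : Matrix (Fin n ⊕ Fin n) (Fin n ⊕ Fin n) ℝ)
    (hΩ : Ω = Matrix.fromBlocks 0 (-1) 1 0)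
    (hJ2 : J * J = -1)
    (hcompat : ∀ x y : Fin n ⊕ Fin n → ℝ,
      (J.mulVec x) ⬝ᵥ Ω.mulVec (J.mulVec y) = x ⬝ᵥ Ω.mulVec y)
    (htame : ∀ x : Fin n ⊕ Fin n → ℝ, x ≠ 0 → 0 < x ⬝ᵥ Ω.mulVec (J.mulVec x)) :
    (∃! N : Matrix (Fin n) (Fin n) ℂ, ∀ a : Fin n,
      (Pi.single (Sum.inl a) 1 : Fin n ⊕ Fin n → ℝ) =
        ∑ b : Fin n, ((N a b).re • (Pi.single (Sum.inr b) 1 : Fin n ⊕ Fin n → ℝ)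
          + (N a b).im • J.mulVec (Pi.single (Sum.inr b) 1))) ∧
    (∀ N : Matrix (Fin n) (Fin n) ℂ,
      (∀ a : Fin n,
        (Pi.single (Sum.inl a) 1 : Fin n ⊕ Fin n → ℝ) =
          ∑ b : Fin n, ((N a b).re • (Pi.single (Sum.inr b) 1 : Fin n ⊕ Fin n → ℝ)
            + (N a b).im • J.mulVec (Pi.single (Sum.inr b) 1))) →
      N.IsSymm ∧ (Matrix.of fun a b => (N a b).im).PosDef) := by
  classical
  set A := J.toBlocks₁₁ with hA
  set B := J.toBlocks₁₂ with hB
  set C := J.toBlocks₂₁ with hC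
  set D := J.toBlocks₂₂ with hD
  have hJb : J = fromBlocks A B C D := (fromBlocks_toBlocks J).symm
  -- compatibility as a matrix identity
  have hmove : ∀ x y : Fin n ⊕ Fin n → ℝ,
      (J.mulVec x) ⬝ᵥ Ω.mulVec (J.mulVec y) = x ⬝ᵥ (Jᵀ * Ω * J).mulVec y := by
    intro x y
    calc (J *ᵥ x) ⬝ᵥ Ω *ᵥ (J *ᵥ y)
        = (J *ᵥ x) ⬝ᵥ (Ω * J) *ᵥ y := by rw [mulVec_mulVec]
      _ = (x ᵥ* Jᵀ) ⬝ᵥ (Ω * J) *ᵥ y := by rw [vecMul_transpose]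
      _ = x ⬝ᵥ Jᵀ *ᵥ ((Ω * J) *ᵥ y) := (dotProduct_mulVec _ _ _).symm
      _ = x ⬝ᵥ (Jᵀ * Ω * J) *ᵥ y := by rw [mulVec_mulVec, mul_assoc]
  have hcompat' : Jᵀ * Ω * J = Ω := by
    ext i j
    have := (hmove (Pi.single i 1) (Pi.single j 1)).symm.trans
      (hcompat (Pi.single i 1) (Pi.single j 1))
    simpa [mulVec_single, single_dotProduct] using this
  have h1 : -(Jᵀ * Ω) = Ω * J := by
    have h := congrArg (fun M => M * J) hcompat'
    rwa [mul_assoc (Jᵀ * Ω) J J, hJ2, mul_neg_one] at h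
  have hΩT : Ωᵀ = -Ω := by
    rw [hΩ, fromBlocks_transpose, fromBlocks_neg]
    simp
  have hsymm : (Ω * J)ᵀ = Ω * J := by
    rw [transpose_mul, hΩT, mul_neg, h1]
  have hΩJ : Ω * J = fromBlocks (-C) (-D) A B := by
    rw [hΩ, hJb, fromBlocks_multiply]
    simp
  -- block identities from symmetry of Ω*J
  have hsymm' := hsymm
  rw [hΩJ, fromBlocks_transpose] at hsymm'
  have hblocks := fromBlocks_inj.mp hsymm'
  have hBsymm : Bᵀ = B := hblocks.2.2.2
  have hD' : D = -Aᵀ := by rw [hblocks.2.1, neg_neg]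
  have hDT : Dᵀ = -A := by rw [hD', transpose_neg, transpose_transpose]
  -- J² = -1, block (1,2)
  have hJ2b : A * B + B * D = 0 := by
    have h := hJ2
    rw [hJb, fromBlocks_multiply,
      show (-1 : Matrix (Fin n ⊕ Fin n) (Fin n ⊕ Fin n) ℝ) = fromBlocks (-1) 0 0 (-1) by
        rw [← fromBlocks_one, fromBlocks_neg, neg_zero]] at h
    exact (fromBlocks_inj.mp h).2.1
  have hAB : A * B = B * Aᵀ := by
    have h := hJ2b
    rw [hD', mul_neg, ← sub_eq_add_neg, sub_eq_zero] at h
    exact h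
  -- B is positive definite
  have hBherm : B.IsHermitian := by
    show Bᴴ = B
    ext i j
    simpa [conjTranspose_apply] using congrFun (congrFun hBsymm i) j
  have hBpos : B.PosDef := by
    refine PosDef.of_dotProduct_mulVec_pos hBherm fun v hv => ?_
    have hx : (Sum.elim 0 v : Fin n ⊕ Fin n → ℝ) ≠ 0 := by
      intro h
      exact hv (funext fun i => congrFun h (Sum.inr i))
    have ht := htame _ hx
    rw [mulVec_mulVec, hΩJ, fromBlocks_mulVec] at ht
    simpa [sumElim_dotProduct_sumElim] using ht
  have hdet : IsUnit B.det := (Matrix.isUnit_iff_isUnit_det B).mp hBpos.isUnit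
  have hBinv : B⁻¹ * B = 1 := nonsing_inv_mul B hdet
  have hBinv' : B * B⁻¹ = 1 := mul_nonsing_inv B hdet
  have hBinvT : (B⁻¹)ᵀ = B⁻¹ := by rw [transpose_nonsing_inv, hBsymm]
  have hRe : (B⁻¹ * A)ᵀ = B⁻¹ * A := by
    calc (B⁻¹ * A)ᵀ = Aᵀ * (B⁻¹)ᵀ := transpose_mul _ _
      _ = Aᵀ * B⁻¹ := by rw [hBinvT]
      _ = B⁻¹ * (B * Aᵀ) * B⁻¹ := by rw [← mul_assoc, hBinv, one_mul]
      _ = B⁻¹ * (A * B) * B⁻¹ := by rw [hAB]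
      _ = B⁻¹ * A := by
        simp only [mul_assoc]
        rw [hBinv', mul_one]
  -- entrywise facts about B and D as entries of J
  have hJBent : ∀ c b : Fin n, J (Sum.inl c) (Sum.inr b) = B b c := by
    intro c b
    exact congrFun (congrFun hBsymm b) c
  have hJDent : ∀ c b : Fin n, J (Sum.inr c) (Sum.inr b) = Dᵀ b c := fun c b => rfl
  -- the candidate matrix
  set N₀ : Matrix (Fin n) (Fin n) ℂ :=
    Matrix.of (fun a b => (⟨(B⁻¹ * A) a b, B⁻¹ a b⟩ : ℂ)) with hN₀def
  have hN₀re : ∀ a b, (N₀ a b).re = (B⁻¹ * A) a b := fun a b => rfl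
  have hN₀im : ∀ a b, (N₀ a b).im = B⁻¹ a b := fun a b => rfl
  -- N₀ satisfies the equation
  have hN₀eq : ∀ a : Fin n,
      (Pi.single (Sum.inl a) 1 : Fin n ⊕ Fin n → ℝ) =
        ∑ b : Fin n, ((N₀ a b).re • (Pi.single (Sum.inr b) 1 : Fin n ⊕ Fin n → ℝ)
          + (N₀ a b).im • J.mulVec (Pi.single (Sum.inr b) 1)) := by
    intro a
    funext i
    rw [Finset.sum_apply]
    cases i with
    | inl c =>
      simp only [Pi.add_apply, Pi.smul_apply, smul_eq_mul, mulVec_single, mul_one,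
        MulOpposite.op_one, one_smul, col_apply,
        hN₀re, hN₀im, Pi.single_apply, Sum.inl.injEq, reduceCtorEq, if_false,
        mul_zero, zero_add]
      have h1 : (B⁻¹ * B) a c = (1 : Matrix (Fin n) (Fin n) ℝ) a c := by rw [hBinv]
      rw [mul_apply, one_apply] at h1
      calc (if c = a then (1:ℝ) else 0)
          = (if a = c then (1:ℝ) else 0) := by
            rcases eq_or_ne a c with h | h
            · simp [h]
            · simp [h, Ne.symm h]
        _ = ∑ b, B⁻¹ a b * B b c := h1.symm
        _ = ∑ b, B⁻¹ a b * J (Sum.inl c) (Sum.inr b) :=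
            Finset.sum_congr rfl fun b _ => by rw [hJBent]
    | inr c =>
      simp only [Pi.add_apply, Pi.smul_apply, smul_eq_mul, mulVec_single, mul_one,
        MulOpposite.op_one, one_smul, col_apply,
        hN₀re, hN₀im, Pi.single_apply, Sum.inr.injEq, reduceCtorEq, if_false,
        mul_ite, mul_one, mul_zero, Finset.sum_add_distrib, Finset.sum_ite_eq,
        Finset.mem_univ, if_true]
      have h2 : (B⁻¹ * A) a c + (B⁻¹ * Dᵀ) a c = 0 := by
        have hx : B⁻¹ * Dᵀ = -(B⁻¹ * A) := by rw [hDT, mul_neg]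
        rw [hx]
        simp
      have h3 : ∑ b, B⁻¹ a b * J (Sum.inr c) (Sum.inr b) = (B⁻¹ * Dᵀ) a c := by
        rw [mul_apply]
        exact Finset.sum_congr rfl fun b _ => by rw [hJDent]
      rw [h3]
      exact h2.symm
  -- uniqueness: any N satisfying the equation equals N₀
  have huniq : ∀ N : Matrix (Fin n) (Fin n) ℂ,
      (∀ a : Fin n, (Pi.single (Sum.inl a) 1 : Fin n ⊕ Fin n → ℝ) =
        ∑ b : Fin n, ((N a b).re • (Pi.single (Sum.inr b) 1 : Fin n ⊕ Fin n → ℝ)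
          + (N a b).im • J.mulVec (Pi.single (Sum.inr b) 1))) → N = N₀ := by
    intro N hN
    have him : (Matrix.of fun a b => (N a b).im) * B = 1 := by
      ext a c
      have h := congrFun (hN a) (Sum.inl c)
      rw [Finset.sum_apply] at h
      simp only [Pi.add_apply, Pi.smul_apply, smul_eq_mul, mulVec_single, mul_one,
        MulOpposite.op_one, one_smul, col_apply,
        Pi.single_apply, Sum.inl.injEq, reduceCtorEq, if_false, mul_zero, zero_add] at h
      rw [mul_apply, one_apply]
      calc ∑ b, (Matrix.of fun a b => (N a b).im) a b * B b c
          = ∑ b, (N a b).im * J (Sum.inl c) (Sum.inr b) :=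
            Finset.sum_congr rfl fun b _ => by rw [of_apply, hJBent]
        _ = (if c = a then (1:ℝ) else 0) := h.symm
        _ = (if a = c then (1:ℝ) else 0) := by
            rcases eq_or_ne a c with hh | hh
            · simp [hh]
            · simp [hh, Ne.symm hh]
    have himeq : (Matrix.of fun a b => (N a b).im) = B⁻¹ := (inv_eq_left_inv him).symm
    have hre : (Matrix.of fun a b => (N a b).re) = B⁻¹ * A := by
      ext a c
      have h := congrFun (hN a) (Sum.inr c)
      rw [Finset.sum_apply] at h
      simp only [Pi.add_apply, Pi.smul_apply, smul_eq_mul, mulVec_single, mul_one,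
        MulOpposite.op_one, one_smul, col_apply,
        Pi.single_apply, Sum.inr.injEq, reduceCtorEq, if_false, mul_ite, mul_zero,
        Finset.sum_add_distrib, Finset.sum_ite_eq, Finset.mem_univ, if_true] at h
      have h3 : ∑ b, (N a b).im * J (Sum.inr c) (Sum.inr b)
          = ((Matrix.of fun a b => (N a b).im) * Dᵀ) a c := by
        rw [mul_apply]
        exact Finset.sum_congr rfl fun b _ => by rw [of_apply, hJDent]
      rw [h3, himeq] at h
      have h4 : (B⁻¹ * Dᵀ) a c = -((B⁻¹ * A) a c) := by
        have hx : B⁻¹ * Dᵀ = -(B⁻¹ * A) := by rw [hDT, mul_neg]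
        rw [hx]
        rfl
      rw [h4] at h
      have h5 : (N a c).re = (B⁻¹ * A) a c := by linarith
      simpa using h5
    ext a b
    refine Complex.ext ?_ ?_
    · rw [hN₀re]
      exact congrFun (congrFun hre a) b
    · rw [hN₀im]
      exact congrFun (congrFun himeq a) b
  refine ⟨⟨N₀, hN₀eq, fun N hN => huniq N hN⟩, ?_⟩
  intro N hN
  have hNe := huniq N hN
  subst hNe
  constructor
  · rw [Matrix.IsSymm]
    ext a b
    rw [transpose_apply]
    refine Complex.ext ?_ ?_
    · rw [hN₀re, hN₀re]
      exact congrFun (congrFun hRe a) b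
    · rw [hN₀im, hN₀im]
      exact congrFun (congrFun hBinvT a) b
  · have hid : (Matrix.of fun a b => (N₀ a b).im) = B⁻¹ := by
      ext a b
      rw [of_apply, hN₀im]
    rw [hid]
    exact hBpos.inv
end

section
/- There is a bijection between the set of pairs (R, I) of real symmetric n×n matrices with I positive definite, and the set of complex structures J on ℝ^(2n) that compatibly tame the standard symplectic form ω, given by (R,I) ↦ J = [[-I⁻¹R, I⁻¹],[-I - R I⁻¹ R, R I⁻¹]]. -/
open Matrix

section Stmt4Aux

variable {m l : Type*} [Fintype m] [DecidableEq m] [Fintype l] [DecidableEq l]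

lemma stmt4_symm_of_posdef {D : Matrix m m ℝ} (hD : D.PosDef) : Dᵀ = D := by
  have := hD.isHermitian.eq
  rwa [conjTranspose_eq_transpose_of_trivial] at this

lemma stmt4_posdef_conj {D Q : Matrix m m ℝ} (hD : D.PosDef) (hQ : IsUnit Q.det) :
    (Qᵀ * D * Q).PosDef := by
  refine posDef_iff_dotProduct_mulVec.2 ⟨?_, ?_⟩
  · rw [Matrix.IsHermitian, conjTranspose_eq_transpose_of_trivial, transpose_mul, transpose_mul,
      transpose_transpose]
    simp [Matrix.mul_assoc, stmt4_symm_of_posdef hD]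
  · intro x hx
    have hinj : Function.Injective (Q.mulVec) :=
      Matrix.mulVec_injective_iff_isUnit.2 ((Matrix.isUnit_iff_isUnit_det Q).2 hQ)
    have hQx : Q *ᵥ x ≠ 0 := by
      intro h; exact hx (hinj (by simpa using h))
    have := hD.dotProduct_mulVec_pos hQx
    simpa [star_trivial, ← mulVec_mulVec, dotProduct_mulVec (x) (Qᵀ), vecMul_transpose] using this

omit [DecidableEq l] in
lemma stmt4_posdef_blockdiag {A : Matrix m m ℝ} {D : Matrix l l ℝ}
    (hA : A.PosDef) (hD : D.PosDef) : (fromBlocks A 0 0 D).PosDef := by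
  refine posDef_iff_dotProduct_mulVec.2 ⟨?_, ?_⟩
  · rw [Matrix.IsHermitian, fromBlocks_conjTranspose]
    simp only [conjTranspose_zero]
    rw [hA.isHermitian.eq, hD.isHermitian.eq]
  · intro x hx
    rw [← Sum.elim_comp_inl_inr x] at hx ⊢
    have : x ∘ Sum.inl ≠ 0 ∨ x ∘ Sum.inr ≠ 0 := by
      by_contra h
      push_neg at h
      exact hx (by rw [h.1, h.2]; ext (i|i) <;> simp)
    simp only [star_trivial, fromBlocks_mulVec, sumElim_dotProduct_sumElim, mulVec_zero,
      zero_mulVec, add_zero, zero_add]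
    rcases this with h | h
    · exact add_pos_of_pos_of_nonneg (hA.dotProduct_mulVec_pos h) (by simpa using hD.posSemidef.dotProduct_mulVec_nonneg (x ∘ Sum.inr))
    · exact add_pos_of_nonneg_of_pos (by simpa using hA.posSemidef.dotProduct_mulVec_nonneg (x ∘ Sum.inl)) (hD.dotProduct_mulVec_pos h)

omit [DecidableEq m] in
lemma stmt4_dot_chain (J Ω : Matrix m m ℝ) (x y : m → ℝ) :
    (J *ᵥ x) ⬝ᵥ (Ω *ᵥ (J *ᵥ y)) = x ⬝ᵥ ((Jᵀ * (Ω * J)) *ᵥ y) := by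
  rw [← mulVec_mulVec, ← mulVec_mulVec, Matrix.dotProduct_mulVec x Jᵀ, vecMul_transpose]

lemma stmt4_dot_ext {M N : Matrix m m ℝ}
    (h : ∀ x y : m → ℝ, x ⬝ᵥ M *ᵥ y = x ⬝ᵥ N *ᵥ y) : M = N := by
  ext i j
  have := h (Pi.single i 1) (Pi.single j 1)
  simpa using this

omit [DecidableEq m] in
lemma stmt4_block22_posdef {W : Matrix m m ℝ} {X : Matrix m l ℝ} {Y : Matrix l m ℝ}
    {B : Matrix l l ℝ} (h : (fromBlocks W X Y B).PosDef) : B.PosDef := by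
  refine posDef_iff_dotProduct_mulVec.2 ⟨?_, ?_⟩
  · have := congrArg Matrix.toBlocks₂₂ h.isHermitian.eq
    simpa [fromBlocks_conjTranspose, fromBlocks_transpose, Matrix.IsSymm] using this
  · intro y hy
    have hx : (Sum.elim 0 y : m ⊕ l → ℝ) ≠ 0 := by
      intro hz
      exact hy (by ext i; exact congrFun hz (Sum.inr i))
    have := h.dotProduct_mulVec_pos hx
    simpa [star_trivial, fromBlocks_mulVec, sumElim_dotProduct_sumElim] using this

end Stmt4Aux

section Stmt4Main

variable {n : ℕ}

private def stmt4Om : Matrix (Fin n ⊕ Fin n) (Fin n ⊕ Fin n) ℝ := fromBlocks 0 (-1) 1 0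

lemma stmt4_neg_one_eq :
    (-1 : Matrix (Fin n ⊕ Fin n) (Fin n ⊕ Fin n) ℝ) = fromBlocks (-1) 0 0 (-1) := by
  rw [← fromBlocks_one, Matrix.fromBlocks_neg, neg_zero]

lemma stmt4_props {R I : Matrix (Fin n) (Fin n) ℝ} (hR : R.IsSymm) (hI : I.IsSymm)
    (hIpd : I.PosDef) :
    (fromBlocks (-(I⁻¹ * R)) I⁻¹ (-I - R * I⁻¹ * R) (R * I⁻¹) *
      fromBlocks (-(I⁻¹ * R)) I⁻¹ (-I - R * I⁻¹ * R) (R * I⁻¹) = -1) ∧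
    (∀ x y : Fin n ⊕ Fin n → ℝ,
      ((fromBlocks (-(I⁻¹ * R)) I⁻¹ (-I - R * I⁻¹ * R) (R * I⁻¹)) *ᵥ x) ⬝ᵥ
        (fromBlocks 0 (-1) 1 0 : Matrix (Fin n ⊕ Fin n) (Fin n ⊕ Fin n) ℝ) *ᵥ
          ((fromBlocks (-(I⁻¹ * R)) I⁻¹ (-I - R * I⁻¹ * R) (R * I⁻¹)) *ᵥ y) =
        x ⬝ᵥ (fromBlocks 0 (-1) 1 0 : Matrix (Fin n ⊕ Fin n) (Fin n ⊕ Fin n) ℝ) *ᵥ y) ∧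
    (∀ x : Fin n ⊕ Fin n → ℝ, x ≠ 0 →
      0 < x ⬝ᵥ (fromBlocks 0 (-1) 1 0 : Matrix (Fin n ⊕ Fin n) (Fin n ⊕ Fin n) ℝ) *ᵥ
        ((fromBlocks (-(I⁻¹ * R)) I⁻¹ (-I - R * I⁻¹ * R) (R * I⁻¹)) *ᵥ x)) := by
  have hdet : IsUnit I.det := hIpd.det_pos.ne'.isUnit
  have h1 : I⁻¹ * I = 1 := nonsing_inv_mul I hdet
  have h2 : I * I⁻¹ = 1 := mul_nonsing_inv I hdet
  have h1' : ∀ X : Matrix (Fin n) (Fin n) ℝ, I⁻¹ * (I * X) = X := fun X => by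
    rw [← Matrix.mul_assoc, h1, Matrix.one_mul]
  have h2' : ∀ X : Matrix (Fin n) (Fin n) ℝ, I * (I⁻¹ * X) = X := fun X => by
    rw [← Matrix.mul_assoc, h2, Matrix.one_mul]
  set J := fromBlocks (-(I⁻¹ * R)) I⁻¹ (-I - R * I⁻¹ * R) (R * I⁻¹) with hJ
  -- J * J = -1
  have hJJ : J * J = -1 := by
    rw [hJ, fromBlocks_multiply, stmt4_neg_one_eq]
    congr 1 <;>
    · simp only [Matrix.neg_mul, Matrix.mul_neg, neg_neg, Matrix.sub_mul, Matrix.mul_sub,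
        Matrix.mul_assoc, h1, h2, h1', h2', Matrix.mul_one, Matrix.one_mul, neg_zero]
      abel
  -- factorization of Ω * J
  have hfact : (fromBlocks 0 (-1) 1 0 : Matrix (Fin n ⊕ Fin n) (Fin n ⊕ Fin n) ℝ) * J =
      (fromBlocks 1 0 R (-1))ᵀ * fromBlocks I 0 0 I⁻¹ * fromBlocks 1 0 R (-1) := by
    rw [hJ, fromBlocks_transpose, fromBlocks_multiply, fromBlocks_multiply, fromBlocks_multiply]
    have hR' : Rᵀ = R := hR
    simp only [Matrix.neg_mul, Matrix.mul_neg, Matrix.one_mul, Matrix.mul_one, Matrix.zero_mul,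
      Matrix.mul_zero, add_zero, zero_add, neg_neg, neg_zero, transpose_one, transpose_zero,
      transpose_neg, hR', Matrix.sub_mul, Matrix.mul_sub]
    congr 1 <;> abel
  have hQdet : IsUnit (fromBlocks 1 0 R (-1) : Matrix (Fin n ⊕ Fin n) (Fin n ⊕ Fin n) ℝ).det := by
    rw [det_fromBlocks_zero₁₂]
    exact ((isUnit_iff_isUnit_det _).1 isUnit_one).mul
      ((isUnit_iff_isUnit_det _).1 isUnit_one.neg)
  have hSpd : ((fromBlocks 0 (-1) 1 0 : Matrix (Fin n ⊕ Fin n) (Fin n ⊕ Fin n) ℝ) * J).PosDef := by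
    rw [hfact]
    exact stmt4_posdef_conj (stmt4_posdef_blockdiag hIpd hIpd.inv) hQdet
  have hSsym : ((fromBlocks 0 (-1) 1 0 : Matrix (Fin n ⊕ Fin n) (Fin n ⊕ Fin n) ℝ) * J)ᵀ =
      (fromBlocks 0 (-1) 1 0 : Matrix (Fin n ⊕ Fin n) (Fin n ⊕ Fin n) ℝ) * J :=
    stmt4_symm_of_posdef hSpd
  have hcompat : Jᵀ * ((fromBlocks 0 (-1) 1 0 : Matrix (Fin n ⊕ Fin n) (Fin n ⊕ Fin n) ℝ) * J) =
      fromBlocks 0 (-1) 1 0 := by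
    rw [← hSsym, ← transpose_mul, Matrix.mul_assoc, hJJ, Matrix.mul_neg, Matrix.mul_one,
      transpose_neg, fromBlocks_transpose]
    simp only [transpose_zero, transpose_one, transpose_neg, Matrix.fromBlocks_neg, neg_neg,
      neg_zero]
  refine ⟨hJJ, fun x y => ?_, fun x hx => ?_⟩
  · rw [stmt4_dot_chain, hcompat]
  · have := hSpd.dotProduct_mulVec_pos hx
    simpa [star_trivial, mulVec_mulVec] using this

end Stmt4Main

/-- There is a bijection between pairs (R,I) of real symmetric n×n
matrices with I positive definite and complex structures J on ℝ^(2n) that compatibly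
tame the standard symplectic form ω (with matrix Ω = [[0,-Iₙ],[Iₙ,0]]), given by
(R,I) ↦ J = [[-I⁻¹R, I⁻¹],[-I - R I⁻¹ R, R I⁻¹]]. -/
theorem stmt_4 {n : ℕ} (Ω : Matrix (Fin n ⊕ Fin n) (Fin n ⊕ Fin n) ℝ)
    (hΩ : Ω = Matrix.fromBlocks 0 (-1) 1 0) :
    ∃ φ : {p : Matrix (Fin n) (Fin n) ℝ × Matrix (Fin n) (Fin n) ℝ //
            p.1.IsSymm ∧ p.2.IsSymm ∧ p.2.PosDef} →
          {J : Matrix (Fin n ⊕ Fin n) (Fin n ⊕ Fin n) ℝ //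
            J * J = -1 ∧
            (∀ x y : Fin n ⊕ Fin n → ℝ,
              (J.mulVec x) ⬝ᵥ Ω.mulVec (J.mulVec y) = x ⬝ᵥ Ω.mulVec y) ∧
            (∀ x : Fin n ⊕ Fin n → ℝ, x ≠ 0 → 0 < x ⬝ᵥ Ω.mulVec (J.mulVec x))},
      Function.Bijective φ ∧
      ∀ p, (φ p : Matrix (Fin n ⊕ Fin n) (Fin n ⊕ Fin n) ℝ) =
        Matrix.fromBlocks (-(p.1.2⁻¹ * p.1.1)) p.1.2⁻¹
          (-p.1.2 - p.1.1 * p.1.2⁻¹ * p.1.1) (p.1.1 * p.1.2⁻¹) := by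
  subst hΩ
  refine ⟨fun p => ⟨fromBlocks (-(p.1.2⁻¹ * p.1.1)) p.1.2⁻¹
      (-p.1.2 - p.1.1 * p.1.2⁻¹ * p.1.1) (p.1.1 * p.1.2⁻¹),
      stmt4_props p.2.1 p.2.2.1 p.2.2.2⟩, ⟨?_, ?_⟩, fun p => rfl⟩
  · -- injective
    rintro ⟨⟨R₁, I₁⟩, hR₁, hI₁, hIpd₁⟩ ⟨⟨R₂, I₂⟩, hR₂, hI₂, hIpd₂⟩ h
    have h' := congrArg Subtype.val h
    simp only at h'
    obtain ⟨hA, hB, hC, hD⟩ := fromBlocks_inj.1 h'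
    have hdet₁ : IsUnit I₁.det := hIpd₁.det_pos.ne'.isUnit
    have hdet₂ : IsUnit I₂.det := hIpd₂.det_pos.ne'.isUnit
    have hI : I₁ = I₂ := by
      rw [← nonsing_inv_nonsing_inv I₁ hdet₁, hB, nonsing_inv_nonsing_inv I₂ hdet₂]
    have hR : R₁ = R₂ := by
      have : R₁ * I₁⁻¹ * I₁ = R₂ * I₂⁻¹ * I₂ := by rw [hD, hI]
      rwa [Matrix.mul_assoc, Matrix.mul_assoc, nonsing_inv_mul I₁ hdet₁,
        nonsing_inv_mul I₂ hdet₂, Matrix.mul_one, Matrix.mul_one] at this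
    subst hI hR
    rfl
  · -- surjective
    rintro ⟨J, h1, h2, h3⟩
    obtain ⟨A, hA⟩ : ∃ A, J.toBlocks₁₁ = A := ⟨_, rfl⟩
    obtain ⟨B, hB⟩ : ∃ B, J.toBlocks₁₂ = B := ⟨_, rfl⟩
    obtain ⟨C, hC⟩ : ∃ C, J.toBlocks₂₁ = C := ⟨_, rfl⟩
    obtain ⟨D, hD⟩ : ∃ D, J.toBlocks₂₂ = D := ⟨_, rfl⟩
    have hJ : fromBlocks A B C D = J := by
      rw [← hA, ← hB, ← hC, ← hD]; exact fromBlocks_toBlocks J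
    -- matrix form of compatibility
    have hM : Jᵀ * ((fromBlocks 0 (-1) 1 0 : Matrix (Fin n ⊕ Fin n) (Fin n ⊕ Fin n) ℝ) * J) =
        fromBlocks 0 (-1) 1 0 := by
      apply stmt4_dot_ext
      intro x y
      rw [← stmt4_dot_chain]
      exact h2 x y
    -- S = Ω * J is symmetric
    have hOmJ : -(Jᵀ * (fromBlocks 0 (-1) 1 0 : Matrix (Fin n ⊕ Fin n) (Fin n ⊕ Fin n) ℝ)) =
        (fromBlocks 0 (-1) 1 0 : Matrix (Fin n ⊕ Fin n) (Fin n ⊕ Fin n) ℝ) * J := by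
      have h := congrArg (· * J) hM
      simp only [Matrix.mul_assoc] at h
      rw [h1] at h
      simpa only [Matrix.mul_neg, Matrix.mul_one] using h
    have hOmT : (fromBlocks 0 (-1) 1 0 : Matrix (Fin n ⊕ Fin n) (Fin n ⊕ Fin n) ℝ)ᵀ =
        -(fromBlocks 0 (-1) 1 0) := by
      rw [fromBlocks_transpose, Matrix.fromBlocks_neg]
      simp
    have hSsym : ((fromBlocks 0 (-1) 1 0 : Matrix (Fin n ⊕ Fin n) (Fin n ⊕ Fin n) ℝ) * J)ᵀ =
        (fromBlocks 0 (-1) 1 0 : Matrix (Fin n ⊕ Fin n) (Fin n ⊕ Fin n) ℝ) * J := by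
      rw [transpose_mul, hOmT, Matrix.mul_neg, hOmJ]
    have hSpd : ((fromBlocks 0 (-1) 1 0 : Matrix (Fin n ⊕ Fin n) (Fin n ⊕ Fin n) ℝ) * J).PosDef := by
      refine posDef_iff_dotProduct_mulVec.2 ⟨?_, fun x hx => ?_⟩
      · rw [Matrix.IsHermitian, conjTranspose_eq_transpose_of_trivial, hSsym]
      · simpa [star_trivial, mulVec_mulVec] using h3 x hx
    -- compute S in block form
    have hprod : (fromBlocks 0 (-1) 1 0 : Matrix (Fin n ⊕ Fin n) (Fin n ⊕ Fin n) ℝ) *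
        fromBlocks A B C D = fromBlocks (-C) (-D) A B := by
      rw [fromBlocks_multiply]
      simp
    rw [← hJ, hprod] at hSpd hSsym
    -- block identities from symmetry
    rw [fromBlocks_transpose] at hSsym
    obtain ⟨-, hAT, -, hBT⟩ := fromBlocks_inj.1 hSsym
    -- hAT : Aᵀ = -D
    have hDT : Dᵀ = -A := by
      have h := congrArg Matrix.transpose hAT
      rw [transpose_transpose, transpose_neg] at h
      rw [h, neg_neg]
    -- block identities from J * J = -1
    rw [← hJ, fromBlocks_multiply, stmt4_neg_one_eq] at h1
    obtain ⟨-, e12, -, e22⟩ := fromBlocks_inj.1 h1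
    -- B is positive definite
    have hBpd : B.PosDef := stmt4_block22_posdef hSpd
    have hBdu : IsUnit B.det := hBpd.det_pos.ne'.isUnit
    have hBB : B * B⁻¹ = 1 := mul_nonsing_inv B hBdu
    have hB'B : B⁻¹ * B = 1 := nonsing_inv_mul B hBdu
    have hBD : B * D = -(A * B) := eq_neg_of_add_eq_zero_right e12
    have hl : B⁻¹ * (B * D) = D := by rw [← Matrix.mul_assoc, hB'B, Matrix.one_mul]
    have hr : A * B * B⁻¹ = A := by rw [Matrix.mul_assoc, hBB, Matrix.mul_one]
    have hDB : D * B⁻¹ = -(B⁻¹ * A) := by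
      have h : B⁻¹ * (B * D) * B⁻¹ = B⁻¹ * (-(A * B)) * B⁻¹ := by rw [hBD]
      rw [hl] at h
      rw [h]
      simp only [Matrix.mul_neg, Matrix.neg_mul, Matrix.mul_assoc, hBB, Matrix.mul_one]
    have hR'symm : (D * B⁻¹).IsSymm := by
      show (D * B⁻¹)ᵀ = D * B⁻¹
      rw [transpose_mul, transpose_nonsing_inv, stmt4_symm_of_posdef hBpd, hDT,
        Matrix.mul_neg, ← hDB]
    have hI'symm : (B⁻¹ : Matrix (Fin n) (Fin n) ℝ).IsSymm := stmt4_symm_of_posdef hBpd.inv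
    refine ⟨⟨(D * B⁻¹, B⁻¹), hR'symm, hI'symm, hBpd.inv⟩, ?_⟩
    apply Subtype.ext
    show fromBlocks _ _ _ _ = J
    rw [← hJ]
    simp only [nonsing_inv_nonsing_inv B hBdu]
    have b11 : -(B * (D * B⁻¹)) = A := by
      rw [hDB, Matrix.mul_neg, ← Matrix.mul_assoc, hBB, Matrix.one_mul, neg_neg]
    have b22 : D * B⁻¹ * B = D := by rw [Matrix.mul_assoc, hB'B, Matrix.mul_one]
    have b21 : -B⁻¹ - D * B⁻¹ * B * (D * B⁻¹) = C := by
      rw [b22]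
      have hCB : C * B = -1 - D * D := by rw [eq_sub_iff_add_eq]; exact e22
      have hC' : C = (-1 - D * D) * B⁻¹ := by
        rw [← hCB, Matrix.mul_assoc, hBB, Matrix.mul_one]
      rw [hC', Matrix.sub_mul, Matrix.neg_mul, Matrix.one_mul, Matrix.mul_assoc]
    rw [b11, b21, b22]
end

section
/- Let N: ℍ → SH(2) be defined by N(τ)₁₁ = (τ²/2)(τ + 3τ̄), N(τ)₁₂ = N(τ)₂₁ = -(3/2)τ(τ + τ̄), N(τ)₂₂ = 3(τ + τ̄) + (3/2)(τ - τ̄). Then for every τ ∈ ℍ, the matrix N(τ) is symmetric with imaginary part Im N(τ) = [[Im(τ)³ + 3Re(τ)²Im(τ), -3Re(τ)Im(τ)],[-3Re(τ)Im(τ), 3Im(τ)]], which is positive definite; hence N takes values in the Siegel upper half space SH(2). -/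
open Matrix ComplexConjugate

/-- The (entrywise) imaginary part of a complex matrix. -/
def matIm {n : ℕ} (τ : Matrix (Fin n) (Fin n) ℂ) : Matrix (Fin n) (Fin n) ℝ :=
  Matrix.of fun i j => (τ i j).im

/-- The period matrix of the t³ model of N=2 supergravity. -/
noncomputable def Nt3 (τ : ℂ) : Matrix (Fin 2) (Fin 2) ℂ :=
  !![(τ^2/2) * (τ + 3 * conj τ), -(3/2) * τ * (τ + conj τ);
     -(3/2) * τ * (τ + conj τ), 3 * (τ + conj τ) + (3/2) * (τ - conj τ)]

/-- For every τ in the upper half plane, the t³-model period matrix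
N(τ) is symmetric, its imaginary part equals
[[Im(τ)³ + 3Re(τ)²Im(τ), -3Re(τ)Im(τ)],[-3Re(τ)Im(τ), 3Im(τ)]], and this imaginary
part is positive definite; hence N takes values in the Siegel upper half space. -/
theorem stmt_9 (τ : ℂ) (hτ : 0 < τ.im) :
    (Nt3 τ).IsSymm ∧
    matIm (Nt3 τ) =
      !![τ.im^3 + 3 * τ.re^2 * τ.im, -3 * τ.re * τ.im;
         -3 * τ.re * τ.im, 3 * τ.im] ∧
    (matIm (Nt3 τ)).PosDef := by
  have him : matIm (Nt3 τ) =
      !![τ.im^3 + 3 * τ.re^2 * τ.im, -3 * τ.re * τ.im;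
         -3 * τ.re * τ.im, 3 * τ.im] := by
    ext i j
    fin_cases i <;> fin_cases j <;>
      simp [matIm, Nt3, Complex.ext_iff, Complex.add_im, Complex.mul_im,
        Complex.div_im, pow_two] <;> ring
  refine ⟨?_, him, ?_⟩
  · rw [Matrix.IsSymm]
    ext i j
    fin_cases i <;> fin_cases j <;> simp [Nt3]
  · rw [him]
    rw [Matrix.posDef_iff_dotProduct_mulVec]
    constructor
    · rw [Matrix.IsHermitian]
      ext i j
      fin_cases i <;> fin_cases j <;> simp
    · intro x hx
      have h0 : x 0 ≠ 0 ∨ x 1 ≠ 0 := by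
        by_contra h
        push_neg at h
        apply hx
        ext i; fin_cases i <;> simp [h.1, h.2]
      simp only [dotProduct, Matrix.mulVec, Fin.sum_univ_two,
        star_trivial]
      norm_num [Matrix.cons_val_zero, Matrix.cons_val_one, Matrix.head_cons]
      set a := x 0; set b := x 1
      have hy := hτ
      rcases eq_or_ne a 0 with ha | ha
      · have hb : b ≠ 0 := by tauto
        rw [ha]
        nlinarith [mul_pos hy (sq_pos_of_ne_zero hb)]
      · nlinarith [mul_nonneg hy.le (sq_nonneg (τ.re * a - b)),
          mul_pos (mul_pos (mul_pos hy hy) hy) (sq_pos_of_ne_zero ha)]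
end
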